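/- arXiv:1402.3817 — 6 statements merged into one kernel-verified Lean document; each statement's English description precedes it below -/
import Mathlib

section
/- Let S be an inverse semigroup with minimal idempotent ε. Then the map a ↦ ε a ε is an idempotent semigroup homomorphism from S onto the maximal subgroup ε S ε, and a σ b if and only if ε a ε = ε b ε. -/
/-- Let `S` be an inverse semigroup with minimal idempotent `ε`.  Then `a ↦ ε * a * ε`
is an idempotent semigroup homomorphism from `S` onto `ε S ε`; the set `ε S ε` is a
group with identity `ε` (the maximal subgroup at `ε`); and `a σ b` iff
`ε * a * ε = ε * b * ε`, where `σ` is the minimum group congruence. -/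
theorem retraction_onto_maximal_subgroup {S : Type*} [Semigroup S] (inv : S → S)
    (h1 : ∀ x : S, x * inv x * x = x)
    (h2 : ∀ x : S, inv x * x * inv x = inv x)
    (h3 : ∀ x y : S, x * y * x = x → y * x * y = y → y = inv x)
    (ε : S) (hε : ε * ε = ε)
    (hmin : ∀ e : S, e * e = e → ε * e = ε ∧ e * ε = ε) :
    (∀ a b : S, ε * (a * b) * ε = (ε * a * ε) * (ε * b * ε)) ∧
    (∀ a : S, ε * (ε * a * ε) * ε = ε * a * ε) ∧
    (∀ x : S, (∃ s : S, x = ε * s * ε) → (ε * x = x ∧ x * ε = x ∧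
        ∃ y : S, (∃ t : S, y = ε * t * ε) ∧ x * y = ε ∧ y * x = ε)) ∧
    (∀ a b : S, (∃ f : S, f * f = f ∧ f * a = f * b) ↔ ε * a * ε = ε * b * ε) := by
  -- `a * inv a` and `inv a * a` are idempotents
  have idem1 : ∀ a : S, (a * inv a) * (a * inv a) = a * inv a := by
    intro a
    calc (a * inv a) * (a * inv a) = (a * inv a * a) * inv a := by simp [mul_assoc]
      _ = a * inv a := by rw [h1]
  have idem2 : ∀ a : S, (inv a * a) * (inv a * a) = inv a * a := by
    intro a
    calc (inv a * a) * (inv a * a) = inv a * (a * inv a * a) := by simp [mul_assoc]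
      _ = inv a * a := by rw [h1]
  -- `ε` is central
  have key : ∀ a : S, ε * a = a * ε := by
    intro a
    -- `inv a * ε * a` is idempotent
    have hg : (inv a * ε * a) * (inv a * ε * a) = inv a * ε * a := by
      have h5 : ε * (a * inv a) = ε := (hmin _ (idem1 a)).1
      calc (inv a * ε * a) * (inv a * ε * a)
          = inv a * ((ε * (a * inv a)) * (ε * a)) := by simp [mul_assoc]
        _ = inv a * (ε * (ε * a)) := by rw [h5]
        _ = inv a * ((ε * ε) * a) := by rw [mul_assoc]
        _ = inv a * ε * a := by rw [hε, mul_assoc]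
    -- `a * ε * inv a` is idempotent
    have he' : (a * ε * inv a) * (a * ε * inv a) = a * ε * inv a := by
      have h5 : ε * (inv a * a) = ε := (hmin _ (idem2 a)).1
      calc (a * ε * inv a) * (a * ε * inv a)
          = a * ((ε * (inv a * a)) * (ε * inv a)) := by simp [mul_assoc]
        _ = a * (ε * (ε * inv a)) := by rw [h5]
        _ = a * ((ε * ε) * inv a) := by rw [mul_assoc]
        _ = a * ε * inv a := by rw [hε, mul_assoc]
    have hag : a * (inv a * ε * a) = ε * a := by
      calc a * (inv a * ε * a) = ((a * inv a) * ε) * a := by simp [mul_assoc]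
        _ = ε * a := by rw [(hmin _ (idem1 a)).2]
    have he'a : (a * ε * inv a) * a = a * ε := by
      calc (a * ε * inv a) * a = a * (ε * (inv a * a)) := by simp [mul_assoc]
        _ = a * ε := by rw [(hmin _ (idem2 a)).1]
    have e1 : ε * a * ε = a * ε := by
      calc ε * a * ε = (a * (inv a * ε * a)) * ε := by rw [hag]
        _ = a * ((inv a * ε * a) * ε) := by rw [mul_assoc]
        _ = a * ε := by rw [(hmin _ hg).2]
    have e2 : ε * (a * ε) = ε * a := by
      have h6 : ε * ((a * ε * inv a) * a) = ε * (a * ε) := by rw [he'a]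
      rw [← h6, ← mul_assoc, (hmin _ he').1]
    rw [← e1, mul_assoc, e2]
  have hq : ∀ a : S, ε * a * ε = ε * a := by
    intro a
    rw [key a, mul_assoc, hε]
  have hq2 : ∀ a : S, ε * a * ε = a * ε := by
    intro a
    rw [hq, key]
  refine ⟨?_, ?_, ?_, ?_⟩
  · intro a b
    calc ε * (a * b) * ε = ε * (a * b) := hq _
      _ = (a * b) * ε := key _
      _ = a * (b * ε) := mul_assoc _ _ _
      _ = a * (ε * b) := by rw [key b]
      _ = (a * ε) * (ε * b) := by rw [mul_assoc, ← mul_assoc ε ε b, hε]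
      _ = (ε * a * ε) * (ε * b) := by rw [hq2 a]
      _ = (ε * a * ε) * (ε * b * ε) := by rw [hq b]
  · intro a
    calc ε * (ε * a * ε) * ε = (ε * ε) * a * (ε * ε) := by simp [mul_assoc]
      _ = ε * a * ε := by rw [hε]
  · rintro x ⟨s, rfl⟩
    have hl : ε * (ε * s * ε) = ε * s * ε := by
      rw [← mul_assoc, ← mul_assoc, hε]
    have hr : (ε * s * ε) * ε = ε * s * ε := by
      rw [mul_assoc, hε]
    set x := ε * s * ε with hx
    refine ⟨hl, hr, ε * inv x * ε, ⟨inv x, rfl⟩, ?_, ?_⟩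
    · have h7 : x * (ε * inv x * ε) = x * inv x * ε := by
        rw [← mul_assoc, ← mul_assoc, hr]
      rw [h7, (hmin _ (idem1 x)).2]
    · have h8 : (ε * inv x * ε) * x = ε * (inv x * x) := by
        rw [mul_assoc, hl, mul_assoc]
      rw [h8, (hmin _ (idem2 x)).1]
  · intro a b
    constructor
    · rintro ⟨f, hf, hfab⟩
      have hεf : ε * f = ε := (hmin f hf).1
      calc ε * a * ε = ε * f * a * ε := by rw [hεf]
        _ = ε * (f * a) * ε := by rw [mul_assoc ε f a]
        _ = ε * (f * b) * ε := by rw [hfab]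
        _ = ε * f * b * ε := by rw [mul_assoc ε f b]
        _ = ε * b * ε := by rw [hεf]
    · intro h
      exact ⟨ε, hε, by rw [← hq a, h, hq b]⟩
end

section
/- The free Clifford monoid CM_X is an inverse monoid, with the inverse of (u, A) given by (u⁻¹, A). -/
/-- The content of an element of a free group: the set of generators occurring in
its reduced word. -/
def FreeGroup.content {X : Type*} [DecidableEq X] (u : FreeGroup X) : Set X :=
  {x | ∃ b : Bool, (x, b) ∈ u.toWord}

/-- The free Clifford monoid on `X`: pairs `(u, A)` of an element of the free group
and a subset of `X` containing the content of `u`. -/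
def FreeCliffordMonoid (X : Type*) [DecidableEq X] :=
  {p : FreeGroup X × Set X // FreeGroup.content p.1 ⊆ p.2}

namespace FreeCliffordMonoid

variable {X : Type*} [DecidableEq X]

theorem content_mul (u v : FreeGroup X) :
    FreeGroup.content (u * v) ⊆ FreeGroup.content u ∪ FreeGroup.content v := by
  rintro x ⟨b, hb⟩
  have := (FreeGroup.toWord_mul_sublist u v).mem hb
  rcases List.mem_append.1 this with h | h
  · exact Or.inl ⟨b, h⟩
  · exact Or.inr ⟨b, h⟩

instance : Mul (FreeCliffordMonoid X) :=
  ⟨fun p q => ⟨(p.1.1 * q.1.1, p.1.2 ∪ q.1.2),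
    fun x hx => (content_mul p.1.1 q.1.1 hx).imp (@p.2 x) (@q.2 x)⟩⟩

instance : One (FreeCliffordMonoid X) :=
  ⟨⟨(1, ∅), by intro x hx; obtain ⟨b, hb⟩ := hx; simp [FreeGroup.toWord_one] at hb⟩⟩

@[simp] theorem mul_def (p q : FreeCliffordMonoid X) :
    p * q = ⟨(p.1.1 * q.1.1, p.1.2 ∪ q.1.2), (p * q).2⟩ := rfl

instance : Monoid (FreeCliffordMonoid X) where
  mul_assoc p q r := Subtype.ext (Prod.ext (mul_assoc _ _ _) (Set.union_assoc _ _ _))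
  one_mul p := Subtype.ext (Prod.ext (one_mul _) (Set.empty_union _))
  mul_one p := Subtype.ext (Prod.ext (mul_one _) (Set.union_empty _))

end FreeCliffordMonoid

/-- The content of an inverse. -/
theorem FreeCliffordMonoid.content_inv {X : Type*} [DecidableEq X] (u : FreeGroup X) :
    FreeGroup.content u⁻¹ ⊆ FreeGroup.content u := by
  rintro x ⟨b, hb⟩
  rw [FreeGroup.toWord_inv, FreeGroup.invRev] at hb
  obtain ⟨⟨y, c⟩, hy, h⟩ := List.mem_map.1 (List.mem_reverse.1 hb)
  obtain ⟨rfl, -⟩ : y = x ∧ c = !b := by simpa using h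
  exact ⟨c, hy⟩

/-- The candidate inverse of `(u, A)`, namely `(u⁻¹, A)`. -/
def FreeCliffordMonoid.pinv {X : Type*} [DecidableEq X] (p : FreeCliffordMonoid X) :
    FreeCliffordMonoid X :=
  ⟨(p.1.1⁻¹, p.1.2), fun x hx => p.2 (content_inv p.1.1 hx)⟩

/-- The free Clifford monoid is an inverse monoid: every element `(u, A)` has as its
unique generalized inverse the element `(u⁻¹, A)`. -/
theorem FreeCliffordMonoid.is_inverse_monoid {X : Type*} [DecidableEq X]
    (p : FreeCliffordMonoid X) :
    p * p.pinv * p = p ∧ p.pinv * p * p.pinv = p.pinv ∧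
    ∀ r : FreeCliffordMonoid X, p * r * p = p → r * p * r = r → r = p.pinv := by
  obtain ⟨⟨u, A⟩, hp⟩ := p
  refine ⟨?_, ?_, ?_⟩
  · apply Subtype.ext; apply Prod.ext; exacts [show u * u⁻¹ * u = u by simp, show A ∪ A ∪ A = A by simp]
  · apply Subtype.ext; apply Prod.ext; exacts [show u⁻¹ * u * u⁻¹ = u⁻¹ by simp, show A ∪ A ∪ A = A by simp]
  · rintro ⟨⟨v, B⟩, hr⟩ h1 h2
    have e1 := congrArg (fun q => q.1.1) h1
    have e2 := congrArg (fun q => q.1.2) h1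
    have e3 := congrArg (fun q => q.1.2) h2
    change u * v * u = u at e1; change A ∪ B ∪ A = A at e2; change B ∪ A ∪ B = B at e3
    have hv : v = u⁻¹ := by
      have : u * v = 1 := by
        have := congrArg (· * u⁻¹) e1
        simpa [mul_assoc] using this
      exact eq_inv_of_mul_eq_one_right this
    have hBA : B ⊆ A := fun x hx => by
      have : x ∈ A ∪ B ∪ A := Or.inl (Or.inr hx)
      rwa [e2] at this
    have hAB : A ⊆ B := fun x hx => by
      have : x ∈ B ∪ A ∪ B := Or.inl (Or.inr hx)
      rwa [e3] at this
    exact Subtype.ext (Prod.ext hv (subset_antisymm hBA hAB))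
end

section
/- The free Clifford monoid CM_X satisfies the universal property: for every group H and every function f : X → H, there is a unique monoid homomorphism φ : CM_X → H extending f along the map ι : X → CM_X, ι(x) = (x, {x}). -/
/-- The canonical embedding `ι : X → CM_X`, `x ↦ (x, {x})`. -/
def FreeCliffordMonoid.iota {X : Type*} [DecidableEq X] (x : X) : FreeCliffordMonoid X :=
  ⟨(FreeGroup.of x, {x}), by
    rintro y ⟨b, hb⟩
    rw [FreeGroup.toWord_of] at hb
    simp_all⟩

namespace FreeCliffordMonoid

variable {X : Type*} [DecidableEq X] {H : Type*} [Group H]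

/-- Constructor helper keeping the named type. -/
def mk (u : FreeGroup X) (A : Set X) (h : FreeGroup.content u ⊆ A) :
    FreeCliffordMonoid X := ⟨(u, A), h⟩

theorem mk_mul (u v : FreeGroup X) (A B : Set X) (hu : FreeGroup.content u ⊆ A)
    (hv : FreeGroup.content v ⊆ B) :
    mk u A hu * mk v B hv =
      mk (u * v) (A ∪ B) (fun x hx => (content_mul u v hx).imp (@hu x) (@hv x)) := rfl

theorem content_of (x : X) : FreeGroup.content (FreeGroup.of x) ⊆ {x} := by
  rintro y ⟨b, hb⟩
  rw [FreeGroup.toWord_of] at hb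
  simp_all

theorem content_inv_of (x : X) : FreeGroup.content (FreeGroup.of x)⁻¹ ⊆ {x} := by
  rintro y ⟨b, hb⟩
  rw [FreeGroup.toWord_inv, FreeGroup.toWord_of] at hb
  simp [FreeGroup.invRev] at hb
  simp [hb.1]

theorem psi_one (ψ : FreeCliffordMonoid X →* H) (A : Set X)
    (h : FreeGroup.content (1 : FreeGroup X) ⊆ A) : ψ (mk 1 A h) = 1 := by
  have he : mk 1 A h * mk 1 A h = mk 1 A h := by
    rw [mk_mul]
    exact Subtype.ext (Prod.ext (one_mul _) (Set.union_self _))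
  have := map_mul ψ (mk 1 A h) (mk 1 A h)
  rw [he] at this
  exact (mul_eq_left.1 this.symm)

theorem psi_indep (ψ : FreeCliffordMonoid X →* H) (u : FreeGroup X) {A B : Set X}
    (hA : FreeGroup.content u ⊆ A) (hB : FreeGroup.content u ⊆ B) :
    ψ ⟨(u, A), hA⟩ = ψ ⟨(u, B), hB⟩ := by
  have h1 : FreeGroup.content (1 : FreeGroup X) ⊆ B := by
    rintro y ⟨b, hb⟩; simp [FreeGroup.toWord_one] at hb
  have h1' : FreeGroup.content (1 : FreeGroup X) ⊆ A := by
    rintro y ⟨b, hb⟩; simp [FreeGroup.toWord_one] at hb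
  have key : ∀ (C D : Set X) (hC : FreeGroup.content u ⊆ C)
      (h1C : FreeGroup.content (1 : FreeGroup X) ⊆ D),
      ψ ⟨(u, D ∪ C), fun x hx => Or.inr (hC hx)⟩ = ψ ⟨(u, C), hC⟩ := by
    intro C D hC h1C
    have : mk 1 D h1C * mk u C hC = mk u (D ∪ C) (fun x hx => Or.inr (hC hx)) := by
      rw [mk_mul]
      exact Subtype.ext (Prod.ext (one_mul _) rfl)
    show ψ (mk u (D ∪ C) _) = ψ (mk u C hC)
    rw [← this, map_mul, psi_one, one_mul]
  have e1 := key A B hA h1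
  have e2 := key B A hB h1'
  rw [← e1, ← e2]
  exact congrArg ψ (Subtype.ext (Prod.ext rfl (Set.union_comm _ _)))

theorem psi_eq_lift (ψ : FreeCliffordMonoid X →* H) (f : X → H)
    (hψ : ∀ x : X, ψ (FreeCliffordMonoid.iota x) = f x) (u : FreeGroup X)
    (A : Set X) (h : FreeGroup.content u ⊆ A) :
    ψ ⟨(u, A), h⟩ = FreeGroup.lift f u := by
  induction u using FreeGroup.induction_on generalizing A with
  | C1 =>
    exact (psi_one ψ A h).trans (by simp)
  | of x =>
    rw [psi_indep ψ _ h (content_of x)]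
    exact (hψ x).trans (show f x = (FreeGroup.lift f) (FreeGroup.of x) by simp)
  | inv_of x _ =>
    rw [psi_indep ψ _ h (content_inv_of x)]
    have h1x : FreeGroup.content (1 : FreeGroup X) ⊆ {x} := by
      rintro y ⟨b, hb⟩; simp [FreeGroup.toWord_one] at hb
    have hmul : FreeCliffordMonoid.iota x * mk (FreeGroup.of x)⁻¹ {x} (content_inv_of x) =
        mk 1 {x} h1x :=
      Subtype.ext (Prod.ext (mul_inv_cancel _) (Set.union_self _))
    have := map_mul ψ (FreeCliffordMonoid.iota x)
      (mk (FreeGroup.of x)⁻¹ {x} (content_inv_of x))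
    rw [hmul, psi_one, hψ x] at this
    exact (eq_inv_of_mul_eq_one_right this.symm).trans
      (show (f x)⁻¹ = (FreeGroup.lift f) (FreeGroup.of x)⁻¹ by simp)
  | mul u v hu hv =>
    have hsub : FreeGroup.content (u * v) ⊆ FreeGroup.content u ∪ FreeGroup.content v :=
      content_mul u v
    rw [psi_indep ψ _ h hsub]
    have hmul : mk u (FreeGroup.content u) subset_rfl * mk v (FreeGroup.content v) subset_rfl =
        mk (u * v) (FreeGroup.content u ∪ FreeGroup.content v) hsub := rfl
    show ψ (mk (u * v) (FreeGroup.content u ∪ FreeGroup.content v) hsub) = _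
    have hu' : ψ (mk u (FreeGroup.content u) subset_rfl) = FreeGroup.lift f u := hu _ subset_rfl
    have hv' : ψ (mk v (FreeGroup.content v) subset_rfl) = FreeGroup.lift f v := hv _ subset_rfl
    rw [← hmul, map_mul, hu', hv', map_mul]

end FreeCliffordMonoid

/-- Universal property of the free Clifford monoid: for every group `H` and every map
`f : X → H` there is a unique monoid homomorphism `φ : CM_X → H` with `φ ∘ ι = f`,
where `ι x = (x, {x})`. -/
theorem FreeCliffordMonoid.universal_property {X : Type*} [DecidableEq X]
    {H : Type*} [Group H] (f : X → H) :
    ∃! φ : FreeCliffordMonoid X →* H, ∀ x : X, φ (FreeCliffordMonoid.iota x) = f x := by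
  refine ⟨{ toFun := fun p => FreeGroup.lift f p.1.1
            map_one' := by simp [OfNat.ofNat, One.one]
            map_mul' := fun p q => by simp [FreeCliffordMonoid.mul_def] }, fun x => by
      simp [FreeCliffordMonoid.iota], fun ψ hψ => ?_⟩
  ext ⟨⟨u, A⟩, h⟩
  exact FreeCliffordMonoid.psi_eq_lift ψ f hψ u A h
end

section
/- Let S be an inverse monoid and μ : S → G = S/σ the canonical surjection onto the maximum group image. Suppose S has a minimal idempotent ε. Then the kernel of the induced ring homomorphism μ̃ : ℤS → ℤG between monoid rings is generated as a left ideal by the elements s − sε for s ∈ S; more precisely, Ker(μ̃) is generated as an abelian group by the elements s − sε, s ∈ S. -/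
/-- Let `S` be an inverse monoid with a minimal idempotent `ε`, and let `μ : S → G` be
the canonical surjection onto its maximum group image (so `μ a = μ b` iff `a σ b`).
Then the kernel of the induced ring homomorphism `μ̃ : ℤS → ℤG` of monoid rings is
generated, as an abelian group, by the elements `s - s ε` for `s ∈ S`. -/
theorem ker_of_augmentation_to_maxGroupImage {S G : Type*} [Monoid S] [Group G]
    (inv : S → S)
    (h1 : ∀ x : S, x * inv x * x = x)
    (h2 : ∀ x : S, inv x * x * inv x = inv x)
    (h3 : ∀ x y : S, x * y * x = x → y * x * y = y → y = inv x)
    (ε : S) (hε : ε * ε = ε)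
    (hmin : ∀ e : S, e * e = e → ε * e = ε ∧ e * ε = ε)
    (μ : S →* G) (hsurj : Function.Surjective μ)
    (hσ : ∀ a b : S, μ a = μ b ↔ ∃ e : S, e * e = e ∧ a * e = b * e) :
    AddMonoidHom.ker (MonoidAlgebra.mapDomainRingHom ℤ μ :
        MonoidAlgebra ℤ S →+* MonoidAlgebra ℤ G).toAddMonoidHom =
      AddSubgroup.closure {x : MonoidAlgebra ℤ S |
        ∃ s : S, x = MonoidAlgebra.of ℤ S s - MonoidAlgebra.of ℤ S (s * ε)} := by
  classical
  have hkey : ∀ s t : S, μ s = μ t ↔ s * ε = t * ε := by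
    intro s t
    constructor
    · intro h
      obtain ⟨e, he, hst⟩ := (hσ s t).mp h
      have heε := (hmin e he).2
      calc s * ε = s * (e * ε) := by rw [heε]
        _ = s * e * ε := by rw [mul_assoc]
        _ = t * e * ε := by rw [hst]
        _ = t * (e * ε) := by rw [mul_assoc]
        _ = t * ε := by rw [heε]
    · intro h
      exact (hσ s t).mpr ⟨ε, hε, h⟩
  have hμε : ∀ s : S, μ (s * ε) = μ s := by
    intro s
    rw [hkey, mul_assoc, hε]
  have happly : ∀ x : MonoidAlgebra ℤ S,
      (MonoidAlgebra.mapDomainRingHom ℤ μ) x = MonoidAlgebra.mapDomain μ x := fun _ => rfl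
  set C := AddSubgroup.closure {x : MonoidAlgebra ℤ S |
    ∃ s : S, x = MonoidAlgebra.of ℤ S s - MonoidAlgebra.of ℤ S (s * ε)} with hC
  set F : MonoidAlgebra ℤ S →+ MonoidAlgebra ℤ S :=
    { toFun := MonoidAlgebra.mapDomain (fun s => s * ε), map_zero' := MonoidAlgebra.mapDomain_zero _,
      map_add' := MonoidAlgebra.mapDomain_add _ } with hF
  have hFs : ∀ (a : S) (c : ℤ), F (MonoidAlgebra.single a c) = MonoidAlgebra.single (a * ε) c :=
    fun a c => MonoidAlgebra.mapDomain_single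
  have hsub : ∀ x : MonoidAlgebra ℤ S, x - F x ∈ C := by
    intro x
    refine MonoidAlgebra.induction_on (motive := fun y => y - F y ∈ C) x (fun a => ?_) (fun f g hf hg => ?_)
      (fun r f hf => ?_)
    · have hFo : F (MonoidAlgebra.of ℤ S a) = MonoidAlgebra.of ℤ S (a * ε) := by
        rw [MonoidAlgebra.of_apply, MonoidAlgebra.of_apply]
        exact hFs a 1
      rw [hFo]
      exact AddSubgroup.subset_closure ⟨a, rfl⟩
    · have h : f + g - F (f + g) = (f - F f) + (g - F g) := by
        rw [map_add]; abel
      rw [h]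
      exact C.add_mem hf hg
    · have h : r • f - F (r • f) = r • (f - F f) := by
        rw [smul_sub, map_zsmul]
      rw [h]
      exact AddSubgroup.zsmul_mem _ hf r
  apply le_antisymm
  · intro x hx
    have h0 : MonoidAlgebra.mapDomain μ x = 0 := hx
    have hfac : (fun s : S => s * ε) =
        (fun g : G => Function.surjInv hsurj g * ε) ∘ μ := by
      funext s
      exact ((hkey (Function.surjInv hsurj (μ s)) s).mp
        (Function.surjInv_eq hsurj (μ s))).symm
    have h2' : F x = 0 := by
      show MonoidAlgebra.mapDomain (fun s : S => s * ε) x = 0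
      have hcomp : MonoidAlgebra.mapDomain ((fun g : G => Function.surjInv hsurj g * ε) ∘ μ) x =
          MonoidAlgebra.mapDomain (fun g : G => Function.surjInv hsurj g * ε) (MonoidAlgebra.mapDomain μ x) :=
        congrArg MonoidAlgebra.ofCoeff Finsupp.mapDomain_comp
      rw [hfac, hcomp, h0, MonoidAlgebra.mapDomain_zero]
    have hx2 := hsub x
    rwa [h2', sub_zero] at hx2
  · rw [hC, AddSubgroup.closure_le]
    rintro x ⟨s, rfl⟩
    rw [SetLike.mem_coe, AddMonoidHom.mem_ker]
    show (MonoidAlgebra.mapDomainRingHom ℤ μ)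
      (MonoidAlgebra.of ℤ S s - MonoidAlgebra.of ℤ S (s * ε)) = 0
    rw [map_sub, happly, happly, MonoidAlgebra.of_apply, MonoidAlgebra.of_apply,
      MonoidAlgebra.mapDomain_single, MonoidAlgebra.mapDomain_single, hμε, sub_self]
end

section
/- Let J : S → G be the surjection of an inverse monoid S onto its maximum group image G. The comma category J ↓ *_G (objects: elements a ∈ G; morphisms s : a → b whenever b·μ(s) = a in G, for s ∈ S) is a filtered category. -/
/-- Let `μ : S → G` be the surjection of an inverse monoid `S` onto its maximum group
image `G`.  The comma category `J ↓ *_G` — whose objects are the elements `a ∈ G` and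
whose morphisms `s : a → b` are the elements `s ∈ S` with `b * μ(s) = a`, composition
being multiplication in `S` — is filtered: it is nonempty, every pair of objects admits
morphisms to a common object, and every parallel pair of morphisms is equalized by a
further morphism. -/
theorem comma_category_filtered {S G : Type*} [Monoid S] [Group G]
    (inv : S → S)
    (h1 : ∀ x : S, x * inv x * x = x)
    (h2 : ∀ x : S, inv x * x * inv x = inv x)
    (h3 : ∀ x y : S, x * y * x = x → y * x * y = y → y = inv x)
    (μ : S →* G) (hsurj : Function.Surjective μ)
    (hσ : ∀ a b : S, μ a = μ b ↔ ∃ e : S, e * e = e ∧ a * e = b * e) :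
    Nonempty G ∧
    (∀ a b : G, ∃ (c : G) (s t : S), c * μ s = a ∧ c * μ t = b) ∧
    (∀ (a b : G) (s t : S), b * μ s = a → b * μ t = a →
      ∃ (c : G) (r : S), c * μ r = b ∧ r * s = r * t) := by
  -- inv of an idempotent is itself
  have hinv_idem : ∀ x : S, x * x = x → inv x = x := by
    intro x hx
    exact (h3 x x (by rw [hx, hx]) (by rw [hx, hx])).symm
  -- product of idempotents is idempotent
  have idemProd : ∀ e f : S, e * e = e → f * f = f → (e * f) * (e * f) = e * f := by
    intro e f he hf
    have hedup : ∀ z : S, e * (e * z) = e * z := fun z => by rw [← mul_assoc, he]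
    have hfdup : ∀ z : S, f * (f * z) = f * z := fun z => by rw [← mul_assoc, hf]
    set g := inv (e * f) with hg
    have hfge : f * g * e = g := by
      apply h3
      · calc e * f * (f * g * e) * (e * f) = e * f * g * (e * f) := by
              simp only [mul_assoc, hedup, hfdup]
        _ = e * f := h1 (e * f)
      · calc f * g * e * (e * f) * (f * g * e) = f * (g * (e * f) * g) * e := by
              simp only [mul_assoc, hedup, hfdup]
        _ = f * g * e := by rw [h2 (e * f)]
    have hgg : g * g = g := by
      conv_lhs => rw [← hfge]
      calc (f * g * e) * (f * g * e) = f * (g * (e * f) * g) * e := by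
            simp only [mul_assoc]
      _ = f * g * e := by rw [h2 (e * f)]
      _ = g := hfge
    have h4 : e * f = inv g := h3 g (e * f) (h2 (e * f)) (h1 (e * f))
    rw [h4, hinv_idem g hgg]
    exact hgg
  -- idempotents commute
  have comm : ∀ e f : S, e * e = e → f * f = f → e * f = f * e := by
    intro e f he hf
    have hedup : ∀ z : S, e * (e * z) = e * z := fun z => by rw [← mul_assoc, he]
    have hfdup : ∀ z : S, f * (f * z) = f * z := fun z => by rw [← mul_assoc, hf]
    have hef := idemProd e f he hf
    have hfe := idemProd f e hf he
    have key : f * e = inv (e * f) := by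
      apply h3
      · calc e * f * (f * e) * (e * f) = (e * f) * (e * f) := by
              simp only [mul_assoc, hedup, hfdup]
        _ = e * f := hef
      · calc f * e * (e * f) * (f * e) = (f * e) * (f * e) := by
              simp only [mul_assoc, hedup, hfdup]
        _ = f * e := hfe
    rw [key, hinv_idem (e * f) hef]
  -- inv s * s is idempotent
  have hinvs : ∀ s : S, (inv s * s) * (inv s * s) = inv s * s := by
    intro s
    calc (inv s * s) * (inv s * s) = inv s * (s * inv s * s) := by simp only [mul_assoc]
    _ = inv s * s := by rw [h1]
  -- inv (s * e) = e * inv s for idempotent e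
  have hinvSE : ∀ (s e : S), e * e = e → inv (s * e) = e * inv s := by
    intro s e he
    symm
    apply h3
    · calc s * e * (e * inv s) * (s * e)
          = s * (e * (inv s * s)) * e := by
            simp only [mul_assoc]
            rw [← mul_assoc e e, he]
      _ = s * ((inv s * s) * e) * e := by rw [comm e (inv s * s) he (hinvs s)]
      _ = (s * inv s * s) * (e * e) := by simp only [mul_assoc]
      _ = s * e := by rw [h1, he]
    · calc e * inv s * (s * e) * (e * inv s)
          = e * ((inv s * s) * e) * inv s := by
            simp only [mul_assoc]
            rw [← mul_assoc e e, he]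
      _ = e * (e * (inv s * s)) * inv s := by rw [comm e (inv s * s) he (hinvs s)]
      _ = (e * e) * (inv s * s * inv s) := by simp only [mul_assoc]
      _ = e * inv s := by rw [he, h2]
  refine ⟨⟨1⟩, ?_, ?_⟩
  · intro a b
    obtain ⟨s, hs⟩ := hsurj 1
    obtain ⟨t, ht⟩ := hsurj (a⁻¹ * b)
    exact ⟨a, s, t, by rw [hs, mul_one], by rw [ht, mul_inv_cancel_left]⟩
  · intro a b s t hs ht
    have hst : μ s = μ t := mul_left_cancel (hs.trans ht.symm)
    obtain ⟨e, he, hse⟩ := (hσ s t).mp hst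
    refine ⟨b * (μ ((s * e) * inv (s * e)))⁻¹, (s * e) * inv (s * e),
      inv_mul_cancel_right _ _, ?_⟩
    have hL : (s * e) * inv (s * e) * s = s * e := by
      rw [hinvSE s e he]
      calc s * e * (e * inv s) * s = s * (e * (inv s * s)) := by
            simp only [mul_assoc]
            rw [← mul_assoc e e, he]
      _ = s * ((inv s * s) * e) := by rw [comm e (inv s * s) he (hinvs s)]
      _ = (s * inv s * s) * e := by simp only [mul_assoc]
      _ = s * e := by rw [h1]
    have hR : (s * e) * inv (s * e) * t = s * e := by
      rw [hse, hinvSE t e he]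
      calc t * e * (e * inv t) * t = t * (e * (inv t * t)) := by
            simp only [mul_assoc]
            rw [← mul_assoc e e, he]
      _ = t * ((inv t * t) * e) := by rw [comm e (inv t * t) he (hinvs t)]
      _ = (t * inv t * t) * e := by simp only [mul_assoc]
      _ = t * e := by rw [h1]
    rw [hL, hR]
end

section
/- Let S be an inverse monoid with minimal idempotent ε, G its maximum group image with projection μ. In the comma category J ↓ *_G (objects a ∈ G, morphisms s : a → b iff b μ(s) = a), every pencil admits a commutative completion: given a family of morphisms s_i : a → a_i (i ∈ I), there exist morphisms r_i : a_i → c to a common object c with r_i ∘ s_i = r_j ∘ s_j for all i, j ∈ I (i.e., the category is strongly filtered). -/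
/-- Let `S` be an inverse monoid with a minimal idempotent `ε`, and `μ : S → G` the
projection onto its maximum group image.  In the comma category `J ↓ *_G` (objects the
elements of `G`, morphisms `s : a → b` the elements `s ∈ S` with `b * μ(s) = a`,
composition being multiplication in `S`), every pencil admits a commutative completion:
given morphisms `s i : a → aa i` (`i ∈ I`), there are an object `c` and morphisms
`r i : aa i → c` with `r i ∘ s i = r j ∘ s j` for all `i, j`.  Hence `J ↓ *_G` is
strongly filtered. -/
theorem comma_category_strongly_filtered {S G : Type*} [Monoid S] [Group G]
    (inv : S → S)
    (h1 : ∀ x : S, x * inv x * x = x)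
    (h2 : ∀ x : S, inv x * x * inv x = inv x)
    (h3 : ∀ x y : S, x * y * x = x → y * x * y = y → y = inv x)
    (ε : S) (hε : ε * ε = ε)
    (hmin : ∀ e : S, e * e = e → ε * e = ε ∧ e * ε = ε)
    (μ : S →* G) (hsurj : Function.Surjective μ)
    (hσ : ∀ a b : S, μ a = μ b ↔ ∃ e : S, e * e = e ∧ a * e = b * e)
    {I : Type*} (a : G) (aa : I → G) (s : I → S)
    (hs : ∀ i : I, aa i * μ (s i) = a) :
    ∃ (c : G) (r : I → S),
      (∀ i : I, c * μ (r i) = aa i) ∧ ∀ i j : I, r i * s i = r j * s j := by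
  -- μ kills idempotents
  have hidem : ∀ e : S, e * e = e → μ e = 1 := by
    intro e he
    have : μ e * μ e = μ e := by rw [← μ.map_mul, he]
    exact mul_left_cancel (this.trans (mul_one (μ e)).symm)
  -- inv x * x is idempotent
  have hix : ∀ x : S, (inv x * x) * (inv x * x) = inv x * x := by
    intro x
    calc (inv x * x) * (inv x * x) = inv x * (x * inv x * x) := by
          simp [mul_assoc]
      _ = inv x * x := by rw [h1]
  -- μ (inv x) = (μ x)⁻¹
  have hinv : ∀ x : S, μ (inv x) = (μ x)⁻¹ := by
    intro x
    have : μ (inv x) * μ x = 1 := by rw [← μ.map_mul]; exact hidem _ (hix x)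
    exact eq_inv_of_mul_eq_one_left this
  refine ⟨a * (μ ε)⁻¹, fun i => ε * inv (s i), ?_, ?_⟩
  · intro i
    rw [μ.map_mul, hinv]
    rw [← hs i]
    group
  · intro i j
    have key : ∀ k : I, ε * inv (s k) * s k = ε := by
      intro k
      rw [mul_assoc]
      exact (hmin _ (hix (s k))).1
    rw [key i, key j]
end
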